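/- If M is an a-coreduced A-module and N is an a-reduced A-module, then there is a natural isomorphism Hom_A(M/aM, N) ≅ Hom_A(M, {n ∈ N : an = 0}). In particular, since Λ_a(M) ≅ M/aM and Γ_a(N) ≅ {n ∈ N : an = 0} in this setting, Hom_A(Λ_a(M), N) ≅ Hom_A(M, Γ_a(N)). -/

import Mathlib

/-- `M` is `a`-reduced. -/
def IsAReduced {A : Type*} [CommRing A] (a : Ideal A)
    (M : Type*) [AddCommGroup M] [Module A M] : Prop :=
  ∀ x ∈ a, ∀ m : M, x ^ 2 • m = 0 → x • m = 0

/-- `M` is `a`-coreduced: `aM = a²M`. -/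
def IsACoreduced {A : Type*} [CommRing A] (a : Ideal A)
    (M : Type*) [AddCommGroup M] [Module A M] : Prop :=
  a • (⊤ : Submodule A M) = (a ^ 2) • (⊤ : Submodule A M)

/-- The `a`-power-torsion submodule `Γ_a(N)`. -/
noncomputable def torsionGamma {A : Type*} [CommRing A] (a : Ideal A)
    (N : Type*) [AddCommGroup N] [Module A N] : Submodule A N :=
  ⨆ k : ℕ, Submodule.torsionBySet A N ((a ^ (k + 1) : Ideal A) : Set A)

open Submodule

/-- Hom(M/aM, N) ≅ Hom(M, N[a]) — no hypotheses needed. -/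
noncomputable def homQuotEquiv {A : Type*} [CommRing A] (a : Ideal A)
    (M : Type*) [AddCommGroup M] [Module A M]
    (N : Type*) [AddCommGroup N] [Module A N] :
    ((M ⧸ (a • (⊤ : Submodule A M))) →ₗ[A] N) ≃ₗ[A]
      (M →ₗ[A] Submodule.torsionBySet A N (a : Set A)) where
  toFun f := LinearMap.codRestrict _ (f ∘ₗ (a • (⊤ : Submodule A M)).mkQ) (fun m => by
    rw [mem_torsionBySet_iff]
    rintro ⟨x, hx⟩
    simp only [LinearMap.comp_apply, ← map_smul]
    rw [show (a • (⊤ : Submodule A M)).mkQ (x • m) = 0 from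
      (Submodule.Quotient.mk_eq_zero _).2 (smul_mem_smul hx mem_top), map_zero])
  invFun g := liftQ _ ((torsionBySet A N (a : Set A)).subtype ∘ₗ g) (by
    rw [LinearMap.ker_comp, ker_subtype, Submodule.comap_bot]
    refine smul_le.2 fun x hx m _ => ?_
    rw [LinearMap.mem_ker, map_smul]
    exact Subtype.ext (((mem_torsionBySet_iff _ _).1 (g m).2) ⟨x, hx⟩))
  map_add' f g := by ext m; rfl
  map_smul' c f := by ext m; rfl
  left_inv f := by
    ext m
    rfl
  right_inv g := by
    ext m
    rfl

theorem pow_smul_eq {A : Type*} [CommRing A] (a : Ideal A)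
    (M : Type*) [AddCommGroup M] [Module A M]
    (hM : a • (⊤ : Submodule A M) = (a ^ 2) • (⊤ : Submodule A M)) (n : ℕ) :
    a ^ (n+1) • (⊤ : Submodule A M) = a • (⊤ : Submodule A M) := by
  induction n with
  | zero => rw [pow_one]
  | succ n ih =>
    have : a ^ (n+2) = a • a ^ (n+1) := by rw [smul_eq_mul, pow_succ, mul_comm]
    rw [this, Submodule.smul_assoc, ih, ← Submodule.smul_assoc, smul_eq_mul, ← pow_two, ← hM]

theorem reduced_pow {A : Type*} [CommRing A] (a : Ideal A)
    (N : Type*) [AddCommGroup N] [Module A N]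
    (hN : ∀ x ∈ a, ∀ m : N, x ^ 2 • m = 0 → x • m = 0)
    (x : A) (hx : x ∈ a) (n : N) : ∀ k, x ^ (k+1) • n = 0 → x • n = 0 := by
  intro k
  induction k with
  | zero => intro h; simpa using h
  | succ k ih =>
    intro h
    apply ih
    apply hN _ (Ideal.pow_mem_of_mem a hx _ (Nat.succ_pos k))
    rw [← pow_mul]
    have he : (k+1)*2 = k + (k+1+1) := by ring
    rw [he, pow_add, mul_smul, h, smul_zero]

theorem torsion_pow_eq {A : Type*} [CommRing A] (a : Ideal A)
    (N : Type*) [AddCommGroup N] [Module A N]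
    (hN : ∀ x ∈ a, ∀ m : N, x ^ 2 • m = 0 → x • m = 0) (k : ℕ) :
    Submodule.torsionBySet A N ((a ^ (k+1) : Ideal A) : Set A)
      = Submodule.torsionBySet A N (a : Set A) := by
  apply le_antisymm
  · intro n hn
    rw [mem_torsionBySet_iff] at hn ⊢
    rintro ⟨x, hx⟩
    exact reduced_pow a N hN x hx n k (hn ⟨x ^ (k+1), Ideal.pow_mem_pow hx _⟩)
  · exact Submodule.torsionBySet_le_torsionBySet_of_subset
      (by exact_mod_cast Ideal.pow_le_self (Nat.succ_ne_zero k))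

theorem stmt14 {A : Type*} [CommRing A] (a : Ideal A)
    (M : Type*) [AddCommGroup M] [Module A M]
    (N : Type*) [AddCommGroup N] [Module A N]
    (hM : IsACoreduced a M) (hN : IsAReduced a N) :
    Nonempty (((M ⧸ (a • (⊤ : Submodule A M))) →ₗ[A] N) ≃ₗ[A]
        (M →ₗ[A] Submodule.torsionBySet A N (a : Set A))) ∧
    Nonempty ((AdicCompletion a M →ₗ[A] N) ≃ₗ[A] (M →ₗ[A] torsionGamma a N)) := by
  refine ⟨⟨homQuotEquiv a M N⟩, ?_⟩
  -- the completion is M ⧸ aM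
  have hpow := pow_smul_eq a M hM
  have hinj : Function.Injective (AdicCompletion.eval a M 1) := by
    intro x y hxy
    rw [← sub_eq_zero, ← map_sub] at hxy
    rw [← sub_eq_zero]
    set z := x - y with hz
    ext n
    match n with
    | 0 =>
      haveI : Subsingleton (M ⧸ (a ^ 0 • ⊤ : Submodule A M)) := by
        rw [Submodule.Quotient.subsingleton_iff, pow_zero, Ideal.one_eq_top, top_smul]
      exact Subsingleton.elim _ _
    | (k+1) =>
      obtain ⟨m, hm⟩ := Submodule.mkQ_surjective _ (z.val (k+1))
      have ht := z.2 (show 1 ≤ k + 1 by omega)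
      rw [← hm] at ht
      rw [AdicCompletion.eval_apply] at hxy
      rw [hxy] at ht
      have hmem : m ∈ (a ^ 1 • ⊤ : Submodule A M) := by
        rwa [show AdicCompletion.transitionMap a M (show 1 ≤ k+1 by omega)
            ((a ^ (k+1) • ⊤ : Submodule A M).mkQ m) = (a ^ 1 • ⊤ : Submodule A M).mkQ m from rfl,
          Submodule.mkQ_apply, Submodule.Quotient.mk_eq_zero] at ht
      rw [pow_one, ← hpow k] at hmem
      rw [← hm, AdicCompletion.val_zero, Pi.zero_apply, Submodule.mkQ_apply, Submodule.Quotient.mk_eq_zero]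
      exact hmem
  let e1 : AdicCompletion a M ≃ₗ[A] M ⧸ (a ^ 1 • ⊤ : Submodule A M) :=
    LinearEquiv.ofBijective (AdicCompletion.eval a M 1) ⟨hinj, AdicCompletion.eval_surjective a M 1⟩
  let e2 : (M ⧸ (a ^ 1 • ⊤ : Submodule A M)) ≃ₗ[A] (M ⧸ (a • ⊤ : Submodule A M)) :=
    Submodule.quotEquivOfEq (a ^ 1 • ⊤ : Submodule A M) (a • ⊤ : Submodule A M) (by rw [pow_one])
  have hGamma : torsionGamma a N = Submodule.torsionBySet A N (a : Set A) := by
    unfold torsionGamma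
    rw [iSup_congr (fun k => torsion_pow_eq a N hN k), iSup_const]
  exact ⟨(LinearEquiv.congrLeft N A (e1.trans e2).symm).symm ≪≫ₗ homQuotEquiv a M N ≪≫ₗ
    LinearEquiv.congrRight (LinearEquiv.ofEq _ _ hGamma.symm)⟩
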